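/- arXiv:math/0601679 — 2 statements merged into one kernel-verified Lean document; each statement's English description precedes it below -/
import Mathlib

section
/- Let (X,d,μ) be a metric measure space with μ doubling with constant C_d, and let S ⊂ X be a regular set with constants θ_S, δ_S. Then μ(cl(S) ∖ S) = 0, where cl(S) denotes the closure of S in X. -/
open MeasureTheory Metric Set NNReal ENNReal Bornology

def IsDoublingMeasure {X : Type*} [MetricSpace X] [MeasurableSpace X]
    (μ : Measure X) (Cd : ℝ≥0) : Prop :=
  ∀ (x : X) (r : ℝ), 0 < r → μ (ball x (2 * r)) ≤ (Cd : ℝ≥0∞) * μ (ball x r)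

def IsRevDoublingMeasure {X : Type*} [MetricSpace X] [MeasurableSpace X]
    (μ : Measure X) (Crd : ℝ≥0) : Prop :=
  ∀ (x : X) (r : ℝ), 0 < r → (Crd : ℝ≥0∞) * μ (ball x r) ≤ μ (ball x (2 * r))

def IsRegularSet {X : Type*} [MetricSpace X] [MeasurableSpace X]
    (μ : Measure X) (S : Set X) (θ : ℝ≥0) (δ : ℝ) : Prop :=
  ∀ x ∈ S, ∀ r : ℝ, 0 < r → r ≤ δ → μ (ball x r) ≤ (θ : ℝ≥0∞) * μ (ball x r ∩ S)

noncomputable def sharpMax {X : Type*} [MetricSpace X] [MeasurableSpace X]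
    (μ : Measure X) (α : ℝ) (A : Set X) (f : X → ℝ) (x : X) : ℝ≥0∞ :=
  ⨆ (r : ℝ) (_ : 0 < r),
    ENNReal.ofReal (r ^ (-α)) * (μ (ball x r))⁻¹ *
      ∫⁻ y in ball x r ∩ A, ENNReal.ofReal |f y - ⨍ z in ball x r ∩ A, f z ∂μ| ∂μ

noncomputable def eLpNormENN {X : Type*} [MeasurableSpace X] (μ : Measure X)
    (p : ℝ≥0∞) (f : X → ℝ≥0∞) : ℝ≥0∞ :=
  if p = ⊤ then essSup f μ else (∫⁻ x, f x ^ p.toReal ∂μ) ^ (1 / p.toReal)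

noncomputable def distSets {X : Type*} [MetricSpace X] (A B : Set X) : ℝ :=
  sInf (Set.image2 dist A B)

noncomputable def maximalFn {X : Type*} [MetricSpace X] [MeasurableSpace X]
    (μ : Measure X) (f : X → ℝ≥0∞) (x : X) : ℝ≥0∞ :=
  ⨆ (r : ℝ) (_ : 0 < r), (μ (ball x r))⁻¹ * ∫⁻ y in ball x r, f y ∂μ

def IsGenGradOn {X : Type*} [MetricSpace X] [MeasurableSpace X] (μ : Measure X)
    (Y : Set X) (u g : X → ℝ) : Prop :=
  (∀ x ∈ Y, 0 ≤ g x) ∧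
  ∃ E : Set X, E ⊆ Y ∧ μ E = 0 ∧
    ∀ x ∈ Y \ E, ∀ y ∈ Y \ E, |u x - u y| ≤ dist x y * (g x + g y)

def MemHajlasz {X : Type*} [MetricSpace X] [MeasurableSpace X] (μ : Measure X)
    (Y : Set X) (p : ℝ≥0∞) (u : X → ℝ) : Prop :=
  MemLp u p (μ.restrict Y) ∧
  ∃ g : X → ℝ, IsGenGradOn μ Y u g ∧ MemLp g p (μ.restrict Y)

noncomputable def hajlaszNorm {X : Type*} [MetricSpace X] [MeasurableSpace X]
    (μ : Measure X) (Y : Set X) (p : ℝ≥0∞) (u : X → ℝ) : ℝ≥0∞ :=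
  eLpNorm u p (μ.restrict Y) +
    ⨅ (g : X → ℝ) (_ : IsGenGradOn μ Y u g), eLpNorm g p (μ.restrict Y)

open scoped Classical in
noncomputable def extZero {X : Type*} (S : Set X) (u : S → ℝ) : X → ℝ :=
  fun x => if h : x ∈ S then u ⟨x, h⟩ else 0

section Aux
variable {X : Type*} [MetricSpace X] [MeasurableSpace X]

lemma doubling_pow {μ : Measure X} {Cd : ℝ≥0}
    (hdbl : IsDoublingMeasure μ Cd) (x : X) {r : ℝ} (hr : 0 < r) (n : ℕ) :
    μ (ball x (2 ^ n * r)) ≤ (Cd : ℝ≥0∞) ^ n * μ (ball x r) := by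
  induction n with
  | zero => simp
  | succ n ih =>
    have h2 : (2:ℝ) ^ (n+1) * r = 2 * (2 ^ n * r) := by ring
    rw [h2]
    calc μ (ball x (2 * (2 ^ n * r))) ≤ Cd * μ (ball x (2 ^ n * r)) :=
          hdbl x _ (by positivity)
      _ ≤ (Cd : ℝ≥0∞) * ((Cd : ℝ≥0∞) ^ n * μ (ball x r)) := by gcongr
      _ = (Cd : ℝ≥0∞) ^ (n+1) * μ (ball x r) := by ring

lemma exists_scale {r R : ℝ} (hr : 0 < r) : ∃ n : ℕ, R ≤ 2 ^ n * r := by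
  obtain ⟨n, hn⟩ := exists_nat_ge (R / r)
  refine ⟨n, ?_⟩
  have h2 : (n : ℝ) ≤ 2 ^ n := by exact_mod_cast (Nat.lt_two_pow_self (n := n)).le
  have : R / r ≤ 2 ^ n := hn.trans h2
  calc R = (R / r) * r := by field_simp
    _ ≤ 2 ^ n * r := by gcongr

lemma doubling_scale {μ : Measure X} {Cd : ℝ≥0}
    (hdbl : IsDoublingMeasure μ Cd) (x : X) {r R : ℝ} (hr : 0 < r) :
    ∃ n : ℕ, μ (ball x R) ≤ (Cd : ℝ≥0∞) ^ n * μ (ball x r) := by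
  obtain ⟨n, hn⟩ := exists_scale (R := R) hr
  exact ⟨n, (measure_mono (ball_subset_ball hn)).trans (doubling_pow hdbl x hr n)⟩

lemma measure_univ_eq_zero_of_ball {μ : Measure X} {Cd : ℝ≥0}
    (hdbl : IsDoublingMeasure μ Cd) {x : X} {r : ℝ} (hr : 0 < r)
    (h0 : μ (ball x r) = 0) (s : Set X) : μ s = 0 := by
  have hz : ∀ R : ℝ, μ (ball x R) = 0 := by
    intro R
    obtain ⟨n, hn⟩ := doubling_scale hdbl x (R := R) hr
    simpa [h0] using hn
  have hcov : s ⊆ ⋃ n : ℕ, ball x n := by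
    intro y _
    obtain ⟨n, hn⟩ := exists_nat_gt (dist y x)
    exact mem_iUnion.2 ⟨n, by simpa [mem_ball] using hn⟩
  exact measure_mono_null hcov (measure_iUnion_null fun n => hz n)

lemma exists_finite_net [OpensMeasurableSpace X] {μ : Measure X} {Cd : ℝ≥0}
    (hdbl : IsDoublingMeasure μ Cd) (hfin : ∀ s : Set X, IsBounded s → μ s < ⊤)
    (hpos : ∀ (y : X) (r : ℝ), 0 < r → 0 < μ (ball y r))
    (x₀ : X) {R ε : ℝ} (hR : 0 < R) (hε : 0 < ε) :
    ∃ t : Set X, t.Finite ∧ ball x₀ R ⊆ ⋃ y ∈ t, ball y ε := by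
  classical
  by_contra h
  push_neg at h
  have H : ∀ t : Finset X, ∃ z, z ∈ ball x₀ R ∧ ∀ y ∈ t, ε ≤ dist z y := by
    intro t
    obtain ⟨z, hz1, hz2⟩ := not_subset.1 (h (↑t) t.finite_toSet)
    refine ⟨z, hz1, fun y hy => ?_⟩
    by_contra hlt
    push_neg at hlt
    exact hz2 (mem_biUnion hy (by simpa [mem_ball] using hlt))
  choose z hz1 hz2 using H
  let t : ℕ → Finset X := fun n => Nat.rec ∅ (fun _ s => insert (z s) s) n
  let u : ℕ → X := fun n => z (t n)
  have hu_in : ∀ n, u n ∈ t (n+1) := fun n => Finset.mem_insert_self _ _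
  have hmono : ∀ {m n : ℕ}, m ≤ n → t m ⊆ t n := by
    intro m n hmn
    induction hmn with
    | refl => exact Finset.Subset.refl _
    | step _ ih => exact ih.trans (Finset.subset_insert _ _)
  have hu_mem : ∀ n, u n ∈ ball x₀ R := fun n => hz1 _
  have hsep : ∀ m n : ℕ, m < n → ε ≤ dist (u n) (u m) := fun m n hmn =>
    hz2 _ _ (hmono hmn (hu_in m))
  have hsep' : ∀ m n : ℕ, m ≠ n → ε ≤ dist (u m) (u n) := by
    intro m n h
    rcases h.lt_or_gt with h' | h'
    · rw [dist_comm]; exact hsep m n h'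
    · exact hsep n m h'
  have hdisj : Pairwise (Function.onFun Disjoint fun n => ball (u n) (ε/2)) :=
    fun m n h => ball_disjoint_ball (by linarith [hsep' m n h])
  obtain ⟨k, hk⟩ := exists_scale (r := ε/2) (R := 2*R) (by linarith)
  have key : ∀ n, μ (ball x₀ R) / (Cd : ℝ≥0∞) ^ k ≤ μ (ball (u n) (ε/2)) := by
    intro n
    have h1 : ball x₀ R ⊆ ball (u n) (2*R) := by
      intro w hw
      have := hu_mem n
      rw [mem_ball] at *
      have := dist_triangle w x₀ (u n)
      rw [dist_comm x₀ (u n)] at this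
      linarith
    have h2 : μ (ball (u n) (2*R)) ≤ (Cd : ℝ≥0∞) ^ k * μ (ball (u n) (ε/2)) :=
      (measure_mono (ball_subset_ball hk)).trans (doubling_pow hdbl _ (by linarith) k)
    exact ENNReal.div_le_of_le_mul (((measure_mono h1).trans h2).trans (mul_comm _ _).le)
  have hsum : (∑' n : ℕ, μ (ball (u n) (ε/2))) ≤ μ (ball x₀ (R + ε/2)) := by
    rw [← measure_iUnion hdisj fun _ => measurableSet_ball]
    refine measure_mono (iUnion_subset fun n w hw => ?_)
    rw [mem_ball] at *
    have := hu_mem n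
    rw [mem_ball] at this
    have := dist_triangle w (u n) x₀
    linarith
  have hc : (0:ℝ≥0∞) < μ (ball x₀ R) / (Cd : ℝ≥0∞) ^ k :=
    ENNReal.div_pos (hpos x₀ R hR).ne' (by simp)
  have htop : (∑' n : ℕ, μ (ball (u n) (ε/2))) = ⊤ := by
    refine top_le_iff.1 ?_
    calc (⊤:ℝ≥0∞) = ∑' _ : ℕ, μ (ball x₀ R) / (Cd : ℝ≥0∞) ^ k :=
          (ENNReal.tsum_const_eq_top_of_ne_zero hc.ne').symm
      _ ≤ _ := ENNReal.tsum_le_tsum key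
  rw [htop] at hsum
  exact absurd hsum (by simpa using (hfin _ isBounded_ball).ne)

lemma secondCountable_of_doubling [OpensMeasurableSpace X] {μ : Measure X} {Cd : ℝ≥0}
    (hdbl : IsDoublingMeasure μ Cd) (hfin : ∀ s : Set X, IsBounded s → μ s < ⊤)
    (hpos : ∀ (y : X) (r : ℝ), 0 < r → 0 < μ (ball y r)) :
    SecondCountableTopology X := by
  apply Metric.secondCountable_of_almost_dense_set
  intro ε hε
  rcases isEmpty_or_nonempty X with hX | ⟨⟨x₀⟩⟩
  · exact ⟨∅, countable_empty, fun x => (IsEmpty.false x).elim⟩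
  choose t htf hnet using fun n : ℕ =>
    exists_finite_net hdbl hfin hpos x₀ (R := (n:ℝ)+1) (ε := ε) (by positivity) hε
  refine ⟨⋃ n, t n, countable_iUnion fun n => (htf n).countable, fun x => ?_⟩
  obtain ⟨n, hn⟩ := exists_nat_gt (dist x x₀)
  have hx : x ∈ ball x₀ ((n:ℝ)+1) := by rw [mem_ball]; linarith
  obtain ⟨y, hy, hxy⟩ := mem_iUnion₂.1 (hnet n hx)
  exact ⟨y, mem_iUnion.2 ⟨n, hy⟩, (mem_ball.1 hxy).le⟩

end Aux

/-- Lemma 2.1: a regular subset of a doubling metric measure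
space has `μ(cl(S) ∖ S) = 0`. -/
theorem measure_closure_diff_regular_set
    (Cd θ : ℝ≥0) (δ : ℝ) (hCd : 1 ≤ Cd) (hθ : 1 ≤ θ) (hδ : 0 < δ)
    {X : Type*} [MetricSpace X] [MeasurableSpace X] [BorelSpace X]
    (μ : Measure X) (hfin : ∀ s : Set X, IsBounded s → μ s < ⊤)
    (hdbl : IsDoublingMeasure μ Cd)
    (S : Set X) (hSmeas : MeasurableSet S) (hreg : IsRegularSet μ S θ δ) :
    μ (closure S \ S) = 0 := by
  by_cases hzero : ∃ x : X, ∃ r : ℝ, 0 < r ∧ μ (ball x r) = 0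
  · obtain ⟨x, r, hr, h0⟩ := hzero
    exact measure_univ_eq_zero_of_ball hdbl hr h0 _
  push_neg at hzero
  have hpos : ∀ (y : X) (r : ℝ), 0 < r → 0 < μ (ball y r) := fun y r hr =>
    pos_iff_ne_zero.2 (hzero y r hr)
  haveI : IsLocallyFiniteMeasure μ :=
    ⟨fun x => ⟨ball x 1, ball_mem_nhds x one_pos, hfin _ isBounded_ball⟩⟩
  haveI : SecondCountableTopology X := secondCountable_of_doubling hdbl hfin hpos
  haveI : IsUnifLocDoublingMeasure μ := by
    refine ⟨⟨Cd^2, Filter.eventually_of_mem self_mem_nhdsWithin fun ε hε x => ?_⟩⟩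
    have hε' : (0:ℝ) < ε := hε
    calc μ (closedBall x (2*ε)) ≤ μ (ball x (2*(2*ε))) :=
          measure_mono (closedBall_subset_ball (by linarith))
      _ ≤ Cd * μ (ball x (2*ε)) := hdbl x _ (by linarith)
      _ ≤ (Cd:ℝ≥0∞) * ((Cd:ℝ≥0∞) * μ (ball x ε)) := by
          gcongr
          exact hdbl x ε hε'
      _ = ((Cd^2 : ℝ≥0) : ℝ≥0∞) * μ (ball x ε) := by
          rw [ENNReal.coe_pow]; ring
      _ ≤ ((Cd^2 : ℝ≥0) : ℝ≥0∞) * μ (closedBall x ε) := by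
          gcongr
          exact ball_subset_closedBall
  set v := IsUnifLocDoublingMeasure.vitaliFamily μ 1 with hv
  have hdens := v.ae_tendsto_measure_inter_div_of_measurableSet hSmeas
  rw [ae_iff] at hdens
  refine measure_mono_null (fun x hx => ?_) hdens
  obtain ⟨hxc, hxS⟩ := hx
  simp only [mem_setOf_eq]
  intro htd
  rw [indicator_of_notMem hxS] at htd
  have hcomp : Filter.Tendsto (fun r : ℝ => μ (S ∩ closedBall x r) / μ (closedBall x r))
      (nhdsWithin 0 (Ioi 0)) (nhds 0) := by
    refine htd.comp (IsUnifLocDoublingMeasure.tendsto_closedBall_filterAt μ (K := 1)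
      (fun _ => x) id Filter.tendsto_id ?_)
    filter_upwards [self_mem_nhdsWithin] with r hr
    exact mem_closedBall_self (by simpa using (le_of_lt hr))
  set C : ℝ≥0∞ := (Cd:ℝ≥0∞)^2 * θ with hC
  have hCd0 : (Cd:ℝ≥0∞) ≠ 0 := ENNReal.coe_ne_zero.2 (by intro h; rw [h] at hCd; exact absurd hCd (by norm_num))
  have hθ0 : (θ:ℝ≥0∞) ≠ 0 := ENNReal.coe_ne_zero.2 (by intro h; rw [h] at hθ; exact absurd hθ (by norm_num))
  have hC0 : C ≠ 0 := mul_ne_zero (pow_ne_zero 2 hCd0) hθ0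
  have hCtop : C ≠ ⊤ :=
    ENNReal.mul_ne_top (ENNReal.pow_ne_top ENNReal.coe_ne_top) ENNReal.coe_ne_top
  have hlow : ∀ᶠ r in nhdsWithin (0:ℝ) (Ioi 0),
      C⁻¹ ≤ μ (S ∩ closedBall x r) / μ (closedBall x r) := by
    filter_upwards [Ioc_mem_nhdsGT_of_mem ⟨le_rfl, hδ⟩] with r hr
    obtain ⟨hr0, hrδ⟩ := hr
    obtain ⟨y, hyS, hyd⟩ := Metric.mem_closure_iff.1 hxc (r/2) (by linarith)
    set a := μ (S ∩ closedBall x r) with ha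
    have hsub1 : ball y (r/2) ⊆ closedBall x r := by
      intro w hw
      rw [mem_ball] at hw
      rw [mem_closedBall]
      have h1 := dist_triangle w y x
      rw [dist_comm x y] at hyd
      linarith
    have hsub2 : closedBall x r ⊆ ball y (2*r) := by
      intro w hw
      rw [mem_closedBall] at hw
      rw [mem_ball]
      have h1 := dist_triangle w x y
      linarith
    have hchain : μ (closedBall x r) ≤ C * a :=
      calc μ (closedBall x r) ≤ μ (ball y (2*r)) := measure_mono hsub2
        _ = μ (ball y (2*(2*(r/2)))) := by ring_nf
        _ ≤ Cd * μ (ball y (2*(r/2))) := hdbl y _ (by linarith)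
        _ ≤ (Cd:ℝ≥0∞) * ((Cd:ℝ≥0∞) * μ (ball y (r/2))) := by
            gcongr
            exact hdbl y _ (by linarith)
        _ ≤ (Cd:ℝ≥0∞) * ((Cd:ℝ≥0∞) * ((θ:ℝ≥0∞) * μ (ball y (r/2) ∩ S))) := by
            gcongr
            exact hreg y hyS (r/2) (by linarith) (by linarith)
        _ ≤ (Cd:ℝ≥0∞) * ((Cd:ℝ≥0∞) * ((θ:ℝ≥0∞) * a)) := by
            gcongr
            exact measure_mono fun w hw => ⟨hw.2, hsub1 hw.1⟩
        _ = C * a := by rw [hC]; ring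
    have ha0 : a ≠ 0 := by
      intro h0
      have h1 := hreg y hyS (r/2) (by linarith) (by linarith)
      have h2 : μ (ball y (r/2) ∩ S) ≤ a := measure_mono fun w hw => ⟨hw.2, hsub1 hw.1⟩
      rw [h0, nonpos_iff_eq_zero] at h2
      rw [h2, mul_zero, nonpos_iff_eq_zero] at h1
      exact (hpos y (r/2) (by linarith)).ne' h1
    have hatop : a ≠ ⊤ :=
      ((measure_mono inter_subset_right).trans_lt (hfin _ isBounded_closedBall)).ne
    have h3 : C⁻¹ ≤ a / (C * a) := by
      rw [ENNReal.le_div_iff_mul_le (Or.inr ha0) (Or.inr hatop), ← mul_assoc,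
        ENNReal.inv_mul_cancel hC0 hCtop, one_mul]
    exact h3.trans (ENNReal.div_le_div_left hchain a)
  have hfinal : C⁻¹ ≤ 0 := ge_of_tendsto hcomp hlow
  rw [nonpos_iff_eq_zero, ENNReal.inv_eq_zero] at hfinal
  exact hCtop hfinal
end

section
/- Let (X,d,μ) be a metric measure space with μ doubling with constant C_d and satisfying the reverse doubling condition with constant C_rd, let S ⊂ X be a closed regular set with constants θ_S, δ_S, and let W_S be a countable family of balls such that the union of the balls in W_S equals X ∖ S, r_B ≤ dist(B, S) ≤ 4 r_B for every B = B(x_B,r_B) ∈ W_S, and every point of X ∖ S lies in at most N₀ balls of W_S. Then there exist constants γ₁, γ₂, γ₃ > 0 depending only on C_d, C_rd, θ_S and N₀, and a family of Borel sets {H_B : B ∈ W_S} such that: (i) H_B ⊂ (γ₁ B) ∩ S for every B ∈ W_S; (ii) μ(B) ≤ γ₂ μ(H_B) whenever B ∈ W_S and r_B ≤ δ_S; and (iii) Σ_{B ∈ W_S} χ_{H_B}(x) ≤ γ₃ for every x ∈ X, where χ_E denotes the characteristic function of E. -/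
open MeasureTheory Metric Set NNReal ENNReal Bornology

section Aux
variable {X : Type*} [MetricSpace X] [MeasurableSpace X]

lemma aux_pow_ball (μ : Measure X) {Cd : ℝ≥0} (hd : IsDoublingMeasure μ Cd)
    (z : X) {s : ℝ} (hs : 0 < s) (k : ℕ) :
    μ (ball z (2 ^ k * s)) ≤ (Cd : ℝ≥0∞) ^ k * μ (ball z s) := by
  induction k with
  | zero => simp
  | succ n ih =>
      have e : (2:ℝ) ^ (n+1) * s = 2 * (2 ^ n * s) := by ring
      calc μ (ball z (2 ^ (n+1) * s)) = μ (ball z (2 * (2 ^ n * s))) := by rw [e]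
        _ ≤ (Cd:ℝ≥0∞) * μ (ball z (2 ^ n * s)) := hd z (2 ^ n * s) (by positivity)
        _ ≤ (Cd:ℝ≥0∞) * ((Cd:ℝ≥0∞) ^ n * μ (ball z s)) := mul_le_mul_right ih _
        _ = (Cd:ℝ≥0∞) ^ (n+1) * μ (ball z s) := by ring

lemma aux_le_ball (μ : Measure X) {Cd : ℝ≥0} (hd : IsDoublingMeasure μ Cd)
    (z : X) {R s : ℝ} (hs : 0 < s) (k : ℕ) (hR : R ≤ 2 ^ k * s) :
    μ (ball z R) ≤ (Cd : ℝ≥0∞) ^ k * μ (ball z s) :=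
  (measure_mono (ball_subset_ball hR)).trans (aux_pow_ball μ hd z hs k)

lemma aux_rev_ball (μ : Measure X) {Crd : ℝ≥0} (hr : IsRevDoublingMeasure μ Crd)
    (z : X) (m : ℕ) : ∀ {s : ℝ}, 0 < s →
    (Crd : ℝ≥0∞) ^ m * μ (ball z (s / 2 ^ m)) ≤ μ (ball z s) := by
  induction m with
  | zero => intro s hs; simp
  | succ n ih =>
      intro s hs
      have h2 : (0:ℝ) < s / 2 := by positivity
      have e : s / 2 ^ (n+1) = (s/2) / 2 ^ n := by ring
      have h3 : (Crd:ℝ≥0∞) * μ (ball z (s/2)) ≤ μ (ball z s) := by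
        have := hr z (s/2) h2
        rwa [show 2 * (s/2) = s by ring] at this
      calc (Crd:ℝ≥0∞) ^ (n+1) * μ (ball z (s / 2 ^ (n+1)))
          = (Crd:ℝ≥0∞) * ((Crd:ℝ≥0∞) ^ n * μ (ball z ((s/2) / 2 ^ n))) := by rw [e]; ring
        _ ≤ (Crd:ℝ≥0∞) * μ (ball z (s/2)) := mul_le_mul_right (ih h2) _
        _ ≤ μ (ball z s) := h3

variable [BorelSpace X]

lemma aux_fincnt (μ : Measure X) (S : Set X) (W : Set (X × ℝ)) (N₀ : ℕ)
    (hcov : (⋃ p ∈ W, ball p.1 p.2) = Sᶜ)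
    (hover : ∀ x ∉ S, {p ∈ W | x ∈ ball p.1 p.2}.encard ≤ N₀)
    (Big : Set X) (hBig : MeasurableSet Big)
    (F : Finset (X × ℝ)) (hFW : ↑F ⊆ W)
    (hsub : ∀ q ∈ F, ball q.1 q.2 ⊆ Big) :
    ∑ q ∈ F, μ (ball q.1 q.2) ≤ (N₀ : ℝ≥0∞) * μ Big := by
  classical
  have key : ∀ z : X, ∑ q ∈ F, (ball q.1 q.2).indicator (fun _ => (1:ℝ≥0∞)) z
      ≤ (N₀:ℝ≥0∞) * Big.indicator (fun _ => (1:ℝ≥0∞)) z := by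
    intro z
    by_cases hz : ∃ q ∈ F, z ∈ ball q.1 q.2
    · obtain ⟨q₀, hq₀F, hq₀z⟩ := hz
      have hzS : z ∉ S := by
        have hz' : z ∈ Sᶜ := by
          rw [← hcov]; exact mem_biUnion (hFW hq₀F) hq₀z
        simpa using hz'
      have hzBig : z ∈ Big := hsub q₀ hq₀F hq₀z
      have hL : ∑ q ∈ F, (ball q.1 q.2).indicator (fun _ => (1:ℝ≥0∞)) z
          = ((F.filter (fun q : X × ℝ => z ∈ ball q.1 q.2)).card : ℝ≥0∞) := by
        rw [Finset.card_filter]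
        push_cast
        refine Finset.sum_congr rfl fun q _ => ?_
        by_cases h : z ∈ ball q.1 q.2 <;> simp [Set.indicator_apply, h]
      have hcard : ((F.filter (fun q : X × ℝ => z ∈ ball q.1 q.2)).card : ℕ∞) ≤ (N₀ : ℕ∞) := by
        have hsubset : (↑(F.filter fun q : X × ℝ => z ∈ ball q.1 q.2) : Set (X×ℝ)) ⊆
            {p ∈ W | z ∈ ball p.1 p.2} := by
          intro q hq
          simp only [Finset.coe_filter, mem_setOf_eq] at hq
          exact ⟨hFW hq.1, hq.2⟩
        calc ((F.filter fun q : X × ℝ => z ∈ ball q.1 q.2).card : ℕ∞)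
            = (↑(F.filter fun q : X × ℝ => z ∈ ball q.1 q.2) : Set (X×ℝ)).encard :=
              (Set.encard_coe_eq_coe_finsetCard _).symm
          _ ≤ _ := Set.encard_mono hsubset
          _ ≤ N₀ := hover z hzS
      have hcard' : ((F.filter fun q : X × ℝ => z ∈ ball q.1 q.2).card) ≤ N₀ := by
        exact_mod_cast hcard
      rw [hL, Set.indicator_of_mem hzBig, mul_one]
      exact_mod_cast hcard'
    · push_neg at hz
      have h0 : ∀ q ∈ F, (ball q.1 q.2).indicator (fun _ => (1:ℝ≥0∞)) z = 0 :=
        fun q hq => Set.indicator_of_notMem (hz q hq) _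
      rw [Finset.sum_eq_zero h0]
      exact zero_le
  calc ∑ q ∈ F, μ (ball q.1 q.2)
      = ∑ q ∈ F, ∫⁻ z, (ball q.1 q.2).indicator (fun _ => (1:ℝ≥0∞)) z ∂μ := by
        refine Finset.sum_congr rfl fun q _ => ?_
        rw [lintegral_indicator measurableSet_ball, setLIntegral_one]
    _ = ∫⁻ z, ∑ q ∈ F, (ball q.1 q.2).indicator (fun _ => (1:ℝ≥0∞)) z ∂μ :=
        (lintegral_finset_sum F fun q _ => (measurable_const.indicator measurableSet_ball)).symm
    _ ≤ ∫⁻ z, (N₀:ℝ≥0∞) * Big.indicator (fun _ => (1:ℝ≥0∞)) z ∂μ := lintegral_mono key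
    _ = (N₀:ℝ≥0∞) * μ Big := by
        rw [lintegral_const_mul _ (measurable_const.indicator hBig),
          lintegral_indicator hBig, setLIntegral_one]

lemma aux_tsum (μ : Measure X) (S : Set X) (W : Set (X × ℝ)) (N₀ : ℕ)
    (hcov : (⋃ p ∈ W, ball p.1 p.2) = Sᶜ)
    (hover : ∀ x ∉ S, {p ∈ W | x ∈ ball p.1 p.2}.encard ≤ N₀)
    (Big : Set X) (hBig : MeasurableSet Big)
    (V : Set (X × ℝ)) (hVW : V ⊆ W)
    (hsub : ∀ q ∈ V, ball q.1 q.2 ⊆ Big) :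
    ∑' q : V, μ (ball (q : X × ℝ).1 (q : X × ℝ).2) ≤ (N₀ : ℝ≥0∞) * μ Big := by
  classical
  rw [ENNReal.tsum_eq_iSup_sum]
  refine iSup_le fun s => ?_
  have e := Finset.sum_image (s := s) (f := fun q : X × ℝ => μ (ball q.1 q.2))
    (g := (Subtype.val : V → X × ℝ)) (fun a _ b _ h => Subtype.ext h)
  rw [← e]
  refine aux_fincnt μ S W N₀ hcov hover Big hBig _ ?_ ?_
  · intro q hq
    simp only [Finset.coe_image, Set.mem_image] at hq
    obtain ⟨i, _, rfl⟩ := hq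
    exact hVW i.2
  · intro q hq
    simp only [Finset.mem_image] at hq
    obtain ⟨i, _, rfl⟩ := hq
    exact hsub i i.2

end Aux


/-- Theorem 2.5: existence of the family of "reflected
quasi-balls" `{H_B : B ∈ W_S}` associated to a Whitney covering of the
complement of a closed regular set. -/
theorem reflected_quasiballs_exist
    (Cd Crd θ : ℝ≥0) (hCd : 1 ≤ Cd) (hCrd : 1 < Crd) (hθ : 1 ≤ θ) (N₀ : ℕ) :
    ∃ (γ₁ : ℝ) (γ₂ : ℝ≥0) (γ₃ : ℕ), 0 < γ₁ ∧ 0 < γ₂ ∧ 0 < γ₃ ∧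
      ∀ (δ : ℝ), 0 < δ →
      ∀ (X : Type*) [MetricSpace X] [MeasurableSpace X] [BorelSpace X]
        (μ : Measure X), (∀ s : Set X, IsBounded s → μ s < ⊤) →
        IsDoublingMeasure μ Cd → IsRevDoublingMeasure μ Crd →
        ∀ S : Set X, IsClosed S → IsRegularSet μ S θ δ →
        ∀ W : Set (X × ℝ), W.Countable →
          (⋃ p ∈ W, ball p.1 p.2) = Sᶜ →
          (∀ p ∈ W, 0 < p.2 ∧ p.2 ≤ distSets (ball p.1 p.2) S ∧
            distSets (ball p.1 p.2) S ≤ 4 * p.2) →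
          (∀ x ∉ S, {p ∈ W | x ∈ ball p.1 p.2}.encard ≤ N₀) →
          ∃ H : X × ℝ → Set X,
            (∀ p ∈ W, MeasurableSet (H p) ∧ H p ⊆ ball p.1 (γ₁ * p.2) ∩ S) ∧
            (∀ p ∈ W, p.2 ≤ δ → μ (ball p.1 p.2) ≤ (γ₂ : ℝ≥0∞) * μ (H p)) ∧
            (∀ x : X, {p ∈ W | x ∈ H p}.encard ≤ γ₃) := by
  classical
  have hCdpos : (0:ℝ≥0) < Cd := lt_of_lt_of_le one_pos hCd
  have hθpos : (0:ℝ≥0) < θ := lt_of_lt_of_le one_pos hθ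
  obtain ⟨m₀, hm₀⟩ := pow_unbounded_of_one_lt
    (R := ℝ≥0) (2 * θ * Cd ^ 7 * ((N₀ : ℝ≥0) + 1)) hCrd
  set m : ℕ := max 1 m₀ with hmdef
  have hm1 : 1 ≤ m := le_max_left _ _
  have hm : 2 * θ * Cd ^ 7 * ((N₀ : ℝ≥0) + 1) ≤ Crd ^ m :=
    hm₀.le.trans (pow_le_pow_right₀ hCrd.le (le_max_right _ _))
  set Kc : ℕ := ⌈(Cd : ℝ)⌉₊ with hKcdef
  have hKc : (Cd : ℝ) ≤ (Kc : ℝ) := Nat.le_ceil _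
  have hKcpos : 0 < Kc := by
    rw [hKcdef]
    exact Nat.ceil_pos.mpr (by exact_mod_cast hCdpos)
  refine ⟨7, 2 * θ * Cd ^ (m + 3), (N₀ + 1) * Kc ^ (2 * m + 4), by norm_num,
    by positivity, by positivity, ?_⟩
  intro δ hδ X _ _ _ μ hfinB hd hrd S hSclosed hreg W hWc hcov hWhit hover
  have h2m1 : (1:ℝ) ≤ 2 ^ m := one_le_pow₀ (by norm_num : (1:ℝ) ≤ 2)
  have h2mpos : (0:ℝ) < 2 ^ m := by positivity
  -- choose the projected centers
  have yex : ∀ p : X × ℝ, ∃ b : X, p ∈ W → (b ∈ S ∧ dist p.1 b < 6 * p.2) := by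
    intro p
    by_cases hp : p ∈ W
    · obtain ⟨hr, h1, h2⟩ := hWhit p hp
      have hne : (Set.image2 dist (ball p.1 p.2) S).Nonempty := by
        by_contra h
        rw [Set.not_nonempty_iff_eq_empty] at h
        have h0 : distSets (ball p.1 p.2) S = 0 := by
          rw [distSets, h, Real.sInf_empty]
        rw [h0] at h1; linarith
      have hbdd : BddBelow (Set.image2 dist (ball p.1 p.2) S) := by
        refine ⟨0, fun t ht => ?_⟩
        obtain ⟨a, ha, b, hb, rfl⟩ := ht
        exact dist_nonneg
      have hlt : sInf (Set.image2 dist (ball p.1 p.2) S) < 5 * p.2 := by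
        have : distSets (ball p.1 p.2) S < 5 * p.2 := lt_of_le_of_lt h2 (by linarith)
        exact this
      obtain ⟨t, ht, htlt⟩ := (csInf_lt_iff hbdd hne).mp hlt
      obtain ⟨a, ha, b, hb, rfl⟩ := ht
      refine ⟨b, fun _ => ⟨hb, ?_⟩⟩
      have h3 : dist p.1 b ≤ dist p.1 a + dist a b := dist_triangle _ _ _
      have ha' : dist p.1 a < p.2 := by rw [dist_comm]; exact mem_ball.mp ha
      linarith
    · exact ⟨p.1, fun h => absurd h hp⟩
  choose y hy using yex
  by_cases hzero : ∀ (z : X) (ρ : ℝ), 0 < ρ → μ (ball z ρ) = 0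
  · refine ⟨fun _ => ∅, fun p hp => ⟨MeasurableSet.empty, empty_subset _⟩,
      fun p hp _ => ?_, fun x => ?_⟩
    · rw [hzero p.1 p.2 (hWhit p hp).1]
      exact zero_le
    · have he : {p ∈ W | x ∈ (∅ : Set X)} = ∅ := by simp
      rw [he]
      simp
  push_neg at hzero
  obtain ⟨x₀, r₀', hr₀', hμ₀⟩ := hzero
  have hpos : ∀ (z : X) (ρ : ℝ), 0 < ρ → μ (ball z ρ) ≠ 0 := by
    intro z ρ hρ h0
    obtain ⟨k, hk⟩ := pow_unbounded_of_one_lt ((dist x₀ z + r₀') / ρ) (one_lt_two (α := ℝ))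
    have hk' : dist x₀ z + r₀' ≤ 2 ^ k * ρ := by
      rw [div_lt_iff₀ hρ] at hk; linarith
    have hsub : ball x₀ r₀' ⊆ ball z (2 ^ k * ρ) := by
      intro t ht
      rw [mem_ball] at ht ⊢
      have h1 : dist t z ≤ dist t x₀ + dist x₀ z := dist_triangle _ _ _
      linarith
    have hle : μ (ball x₀ r₀') ≤ (Cd:ℝ≥0∞) ^ k * μ (ball z ρ) :=
      (measure_mono hsub).trans (aux_pow_ball μ hd z hρ k)
    rw [h0, mul_zero] at hle
    exact hμ₀ (le_antisymm hle zero_le)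
  -- the construction
  refine ⟨fun p => (ball (y p) (p.2 / 2 ^ m) ∩ S) \
      ⋃ q ∈ {q ∈ W | 2 ^ m * q.2 ≤ p.2}, ball (y q) (q.2 / 2 ^ m), ?_, ?_, ?_⟩
  · -- (i)
    intro p hp
    constructor
    · exact (measurableSet_ball.inter hSclosed.measurableSet).diff
        (MeasurableSet.biUnion (hWc.mono (sep_subset _ _)) fun q _ => measurableSet_ball)
    · rintro z ⟨⟨hz1, hz2⟩, -⟩
      refine ⟨mem_ball.mpr ?_, hz2⟩
      have h1 : dist z (y p) < p.2 / 2 ^ m := mem_ball.mp hz1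
      have h2 : dist (y p) p.1 < 6 * p.2 := by
        rw [dist_comm]; exact (hy p hp).2
      have h3 : p.2 / 2 ^ m ≤ p.2 := div_le_self (hWhit p hp).1.le h2m1
      have h4 : dist z p.1 ≤ dist z (y p) + dist (y p) p.1 := dist_triangle _ _ _
      linarith
  · -- (ii)
    intro p hp hpδ
    have hr : 0 < p.2 := (hWhit p hp).1
    have hτpos : 0 < p.2 / 2 ^ m := by positivity
    have hτδ : p.2 / 2 ^ m ≤ δ := le_trans (div_le_self hr.le h2m1) hpδ
    have hypS : y p ∈ S := (hy p hp).1
    set yp := y p with hypdef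
    set τr : ℝ := p.2 / 2 ^ m with hτrdef
    set A : Set X := ball yp τr ∩ S with hAdef
    set U : Set X := ⋃ q ∈ {q ∈ W | 2 ^ m * q.2 ≤ p.2}, ball (y q) (q.2 / 2 ^ m) with hUdef
    set T : Set (X × ℝ) :=
      {q ∈ W | 2 ^ m * q.2 ≤ p.2 ∧ (ball (y q) (q.2 / 2 ^ m) ∩ ball yp τr).Nonempty} with hTdef
    have hTW : T ⊆ W := fun q hq => hq.1
    have hcap : U ∩ ball yp τr ⊆ ⋃ q ∈ T, ball (y q) (q.2 / 2 ^ m) := by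
      rintro z ⟨hzU, hzb⟩
      rw [hUdef, mem_iUnion₂] at hzU
      obtain ⟨q, hq, hz⟩ := hzU
      exact mem_biUnion ⟨hq.1, hq.2, ⟨z, hz, hzb⟩⟩ hz
    have hsum1 : μ (U ∩ ball yp τr) ≤ ∑' q : T, μ (ball (y (q:X×ℝ)) ((q:X×ℝ).2 / 2 ^ m)) :=
      (measure_mono hcap).trans (measure_biUnion_le μ (hWc.mono hTW) _)
    have hc₀ : ((2 * θ * Cd ^ 7 * ((N₀ : ℝ≥0) + 1) : ℝ≥0) : ℝ≥0∞) ≤ (Crd:ℝ≥0∞) ^ m := by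
      rw [← ENNReal.coe_pow]
      exact_mod_cast hm
    have step4 : ∀ q ∈ T, ((2 * θ * Cd ^ 7 * ((N₀ : ℝ≥0) + 1) : ℝ≥0) : ℝ≥0∞) *
        μ (ball (y q) (q.2 / 2 ^ m)) ≤ (Cd:ℝ≥0∞) ^ 3 * μ (ball q.1 q.2) := by
      intro q hq
      have hqW : q ∈ W := hTW hq
      have hqr : 0 < q.2 := (hWhit q hqW).1
      have hincl : ball (y q) q.2 ⊆ ball q.1 (2 ^ 3 * q.2) := by
        intro z hz
        rw [mem_ball] at hz ⊢
        have h1 : dist z q.1 ≤ dist z (y q) + dist (y q) q.1 := dist_triangle _ _ _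
        have h2 : dist (y q) q.1 < 6 * q.2 := by rw [dist_comm]; exact (hy q hqW).2
        norm_num
        linarith
      calc ((2 * θ * Cd ^ 7 * ((N₀ : ℝ≥0) + 1) : ℝ≥0) : ℝ≥0∞) * μ (ball (y q) (q.2 / 2 ^ m))
          ≤ (Crd:ℝ≥0∞) ^ m * μ (ball (y q) (q.2 / 2 ^ m)) := mul_le_mul_left hc₀ _
        _ ≤ μ (ball (y q) q.2) := aux_rev_ball μ hrd (y q) m hqr
        _ ≤ μ (ball q.1 (2 ^ 3 * q.2)) := measure_mono hincl
        _ ≤ (Cd:ℝ≥0∞) ^ 3 * μ (ball q.1 q.2) := aux_pow_ball μ hd q.1 hqr 3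
    have hsubT : ∀ q ∈ T, ball q.1 q.2 ⊆ ball yp (9 * τr) := by
      intro q hq z hz
      obtain ⟨hqW, hqsm, w, hw⟩ := hq
      have hw1 : dist w (y q) < q.2 / 2 ^ m := mem_ball.mp hw.1
      have hw2 : dist w yp < τr := mem_ball.mp hw.2
      have hq2 : q.2 ≤ τr := by
        rw [hτrdef, le_div_iff₀ h2mpos]
        linarith
      have hqτ : q.2 / 2 ^ m ≤ q.2 := div_le_self (hWhit q hqW).1.le h2m1
      have h1 : dist z q.1 < q.2 := mem_ball.mp hz
      have h2 : dist q.1 (y q) < 6 * q.2 := (hy q hqW).2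
      have h3 : dist z yp ≤ dist z q.1 + dist q.1 (y q) + dist (y q) w + dist w yp := by
        have t1 : dist z yp ≤ dist z (y q) + dist (y q) w + dist w yp := by
          have := dist_triangle4 z (y q) w yp
          linarith [dist_triangle z (y q) w, dist_triangle z w yp]
        have t2 : dist z (y q) ≤ dist z q.1 + dist q.1 (y q) := dist_triangle _ _ _
        have := dist_triangle4 z q.1 (y q) w
        have := dist_triangle (y q) w yp
        calc dist z yp ≤ dist z w + dist w yp := dist_triangle _ _ _
          _ ≤ (dist z q.1 + dist q.1 (y q) + dist (y q) w) + dist w yp := by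
              have := dist_triangle4 z q.1 (y q) w
              linarith
          _ = _ := by ring
      have h4 : dist (y q) w = dist w (y q) := dist_comm _ _
      rw [mem_ball]
      rw [h4] at h3
      have : dist z yp < q.2 + 6 * q.2 + q.2 / 2 ^ m + τr := by linarith
      linarith
    have hsumT : ∑' q : T, μ (ball (q:X×ℝ).1 (q:X×ℝ).2) ≤ (N₀:ℝ≥0∞) * μ (ball yp (9 * τr)) :=
      aux_tsum μ S W N₀ hcov hover _ measurableSet_ball T hTW hsubT
    have hbig9 : μ (ball yp (9 * τr)) ≤ (Cd:ℝ≥0∞) ^ 4 * μ (ball yp τr) :=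
      aux_le_ball μ hd yp hτpos 4 (by norm_num; linarith)
    have hUbound : ((2 * θ * Cd ^ 7 * ((N₀ : ℝ≥0) + 1) : ℝ≥0) : ℝ≥0∞) * μ (U ∩ ball yp τr)
        ≤ (Cd:ℝ≥0∞) ^ 7 * (N₀:ℝ≥0∞) * μ (ball yp τr) := by
      calc ((2 * θ * Cd ^ 7 * ((N₀ : ℝ≥0) + 1) : ℝ≥0) : ℝ≥0∞) * μ (U ∩ ball yp τr)
          ≤ _ * ∑' q : T, μ (ball (y (q:X×ℝ)) ((q:X×ℝ).2 / 2 ^ m)) := mul_le_mul_right hsum1 _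
        _ = ∑' q : T, ((2 * θ * Cd ^ 7 * ((N₀ : ℝ≥0) + 1) : ℝ≥0) : ℝ≥0∞) *
              μ (ball (y (q:X×ℝ)) ((q:X×ℝ).2 / 2 ^ m)) := ENNReal.tsum_mul_left.symm
        _ ≤ ∑' q : T, (Cd:ℝ≥0∞) ^ 3 * μ (ball (q:X×ℝ).1 (q:X×ℝ).2) :=
            ENNReal.tsum_le_tsum (fun q => step4 q q.2)
        _ = (Cd:ℝ≥0∞) ^ 3 * ∑' q : T, μ (ball (q:X×ℝ).1 (q:X×ℝ).2) := ENNReal.tsum_mul_left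
        _ ≤ (Cd:ℝ≥0∞) ^ 3 * ((N₀:ℝ≥0∞) * ((Cd:ℝ≥0∞) ^ 4 * μ (ball yp τr))) :=
            mul_le_mul_right (hsumT.trans (mul_le_mul_right hbig9 _)) _
        _ = (Cd:ℝ≥0∞) ^ 7 * (N₀:ℝ≥0∞) * μ (ball yp τr) := by ring
    have hCdne0 : (Cd:ℝ≥0∞) ≠ 0 := ENNReal.coe_ne_zero.mpr hCdpos.ne'
    have hk0 : ((Cd:ℝ≥0∞) ^ 7 * ((N₀:ℝ≥0∞) + 1)) ≠ 0 := by
      apply mul_ne_zero (pow_ne_zero _ hCdne0)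
      simp
    have hktop : ((Cd:ℝ≥0∞) ^ 7 * ((N₀:ℝ≥0∞) + 1)) ≠ ⊤ := by
      apply ENNReal.mul_ne_top (ENNReal.pow_ne_top ENNReal.coe_ne_top)
      exact ENNReal.add_ne_top.mpr ⟨ENNReal.natCast_ne_top _, ENNReal.one_ne_top⟩
    have hU2 : 2 * (θ:ℝ≥0∞) * μ (U ∩ ball yp τr) ≤ μ (ball yp τr) := by
      rw [← ENNReal.mul_le_mul_iff_right hk0 hktop]
      calc (Cd:ℝ≥0∞) ^ 7 * ((N₀:ℝ≥0∞) + 1) * (2 * (θ:ℝ≥0∞) * μ (U ∩ ball yp τr))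
          = ((2 * θ * Cd ^ 7 * ((N₀ : ℝ≥0) + 1) : ℝ≥0) : ℝ≥0∞) * μ (U ∩ ball yp τr) := by
            push_cast
            ring
        _ ≤ (Cd:ℝ≥0∞) ^ 7 * (N₀:ℝ≥0∞) * μ (ball yp τr) := hUbound
        _ ≤ (Cd:ℝ≥0∞) ^ 7 * ((N₀:ℝ≥0∞) + 1) * μ (ball yp τr) := by
            gcongr
            exact le_self_add
    have hregA : μ (ball yp τr) ≤ (θ:ℝ≥0∞) * μ A := hreg yp hypS τr hτpos hτδ
    have hApart : μ A ≤ μ (A \ U) + μ (U ∩ ball yp τr) := by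
      have hsubA : A ⊆ (A \ U) ∪ (U ∩ ball yp τr) := by
        intro z hz
        by_cases hzU : z ∈ U
        · exact Or.inr ⟨hzU, hz.1⟩
        · exact Or.inl ⟨hz, hzU⟩
      exact (measure_mono hsubA).trans (measure_union_le _ _)
    have hμτfin : μ (ball yp τr) ≠ ⊤ := (hfinB _ isBounded_ball).ne
    have hkey : μ (ball yp τr) ≤ 2 * (θ:ℝ≥0∞) * μ (A \ U) := by
      have h2 : μ (ball yp τr) ≤ (θ:ℝ≥0∞) * μ (A \ U) + (θ:ℝ≥0∞) * μ (U ∩ ball yp τr) :=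
        hregA.trans ((mul_le_mul_right hApart _).trans_eq (mul_add _ _ _))
      have h3 : (θ:ℝ≥0∞) * μ (U ∩ ball yp τr) + (θ:ℝ≥0∞) * μ (U ∩ ball yp τr)
          ≤ μ (ball yp τr) := by
        calc (θ:ℝ≥0∞) * μ (U ∩ ball yp τr) + (θ:ℝ≥0∞) * μ (U ∩ ball yp τr)
            = 2 * (θ:ℝ≥0∞) * μ (U ∩ ball yp τr) := by ring
          _ ≤ _ := hU2
      have h4 : μ (ball yp τr) + μ (ball yp τr) ≤
          ((θ:ℝ≥0∞) * μ (A \ U) + (θ:ℝ≥0∞) * μ (A \ U)) + μ (ball yp τr) := by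
        calc μ (ball yp τr) + μ (ball yp τr)
            ≤ ((θ:ℝ≥0∞) * μ (A \ U) + (θ:ℝ≥0∞) * μ (U ∩ ball yp τr)) +
              ((θ:ℝ≥0∞) * μ (A \ U) + (θ:ℝ≥0∞) * μ (U ∩ ball yp τr)) := add_le_add h2 h2
          _ = ((θ:ℝ≥0∞) * μ (A \ U) + (θ:ℝ≥0∞) * μ (A \ U)) +
              ((θ:ℝ≥0∞) * μ (U ∩ ball yp τr) + (θ:ℝ≥0∞) * μ (U ∩ ball yp τr)) := by ring
          _ ≤ _ := add_le_add_right h3 _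
      have h5 := (ENNReal.add_le_add_iff_right hμτfin).mp h4
      calc μ (ball yp τr) ≤ (θ:ℝ≥0∞) * μ (A \ U) + (θ:ℝ≥0∞) * μ (A \ U) := h5
        _ = 2 * (θ:ℝ≥0∞) * μ (A \ U) := by ring
    have hincl2 : ball p.1 p.2 ⊆ ball yp (2 ^ (m + 3) * τr) := by
      intro z hz
      rw [mem_ball] at hz ⊢
      have h1 : dist z yp ≤ dist z p.1 + dist p.1 yp := dist_triangle _ _ _
      have h2 : dist p.1 yp < 6 * p.2 := (hy p hp).2
      have e8 : (2:ℝ) ^ (m + 3) * τr = 8 * p.2 := by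
        rw [hτrdef, pow_add]
        field_simp
        ring
      rw [e8]
      linarith
    calc μ (ball p.1 p.2) ≤ μ (ball yp (2 ^ (m + 3) * τr)) := measure_mono hincl2
      _ ≤ (Cd:ℝ≥0∞) ^ (m + 3) * μ (ball yp τr) := aux_pow_ball μ hd yp hτpos (m + 3)
      _ ≤ (Cd:ℝ≥0∞) ^ (m + 3) * (2 * (θ:ℝ≥0∞) * μ (A \ U)) := mul_le_mul_right hkey _
      _ = ((2 * θ * Cd ^ (m + 3) : ℝ≥0) : ℝ≥0∞) * μ (A \ U) := by push_cast; ring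
  · -- (iii)
    intro x
    by_cases hDne : {p ∈ W | x ∈ (ball (y p) (p.2 / 2 ^ m) ∩ S) \
        ⋃ q ∈ {q ∈ W | 2 ^ m * q.2 ≤ p.2}, ball (y q) (q.2 / 2 ^ m)}.Nonempty
    swap
    · rw [not_nonempty_iff_eq_empty] at hDne
      rw [hDne]
      simp
    obtain ⟨p₀, hp₀⟩ := hDne
    set D := {p ∈ W | x ∈ (ball (y p) (p.2 / 2 ^ m) ∩ S) \
        ⋃ q ∈ {q ∈ W | 2 ^ m * q.2 ≤ p.2}, ball (y q) (q.2 / 2 ^ m)} with hDdef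
    have hp₀W : p₀ ∈ W := hp₀.1
    have hr₀ : 0 < p₀.2 := (hWhit p₀ hp₀W).1
    have hxball : ∀ p ∈ D, x ∈ ball (y p) (p.2 / 2 ^ m) := fun p hp => hp.2.1.1
    have hcomp : ∀ p ∈ D, ∀ q ∈ D, p.2 < 2 ^ m * q.2 := by
      intro p hp q hq
      by_contra hle
      push_neg at hle
      exact hp.2.2 (mem_biUnion (⟨hq.1, hle⟩ : q ∈ {q ∈ W | 2 ^ m * q.2 ≤ p.2}) (hxball q hq))
    have hdxp : ∀ p ∈ D, dist x p.1 < 7 * p.2 := by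
      intro p hp
      have hpW : p ∈ W := hp.1
      have hpr : 0 < p.2 := (hWhit p hpW).1
      have h1 : dist x (y p) < p.2 / 2 ^ m := mem_ball.mp (hxball p hp)
      have h2 : dist (y p) p.1 < 6 * p.2 := by rw [dist_comm]; exact (hy p hpW).2
      have h3 : p.2 / 2 ^ m ≤ p.2 := div_le_self hpr.le h2m1
      have h4 : dist x p.1 ≤ dist x (y p) + dist (y p) p.1 := dist_triangle _ _ _
      linarith
    have hsubBig : ∀ p ∈ D, ball p.1 p.2 ⊆ ball x (2 ^ (m + 3) * p₀.2) := by
      intro p hp z hz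
      rw [mem_ball] at hz ⊢
      have h1 : dist z x ≤ dist z p.1 + dist p.1 x := dist_triangle _ _ _
      have h2 : dist p.1 x < 7 * p.2 := by rw [dist_comm]; exact hdxp p hp
      have h3 : p.2 < 2 ^ m * p₀.2 := hcomp p hp p₀ hp₀
      have e : (2:ℝ) ^ (m + 3) * p₀.2 = 8 * (2 ^ m * p₀.2) := by rw [pow_add]; ring
      rw [e]
      linarith
    have hlowBig : ∀ p ∈ D, μ (ball x (2 ^ (m + 3) * p₀.2)) ≤
        (Cd:ℝ≥0∞) ^ (2 * m + 4) * μ (ball p.1 p.2) := by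
      intro p hp
      have hpW : p ∈ W := hp.1
      have hpr : 0 < p.2 := (hWhit p hpW).1
      have hinc : ball x (2 ^ (m + 3) * p₀.2) ⊆ ball p.1 (2 ^ (2 * m + 4) * p.2) := by
        intro z hz
        rw [mem_ball] at hz ⊢
        have h1 : dist z p.1 ≤ dist z x + dist x p.1 := dist_triangle _ _ _
        have h2 : dist x p.1 < 7 * p.2 := hdxp p hp
        have h3 : p₀.2 < 2 ^ m * p.2 := hcomp p₀ hp₀ p hp
        have h7 : (7:ℝ) ≤ 2 ^ (2 * m + 3) := by
          calc (7:ℝ) ≤ 2 ^ 5 := by norm_num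
            _ ≤ 2 ^ (2 * m + 3) := by
                apply pow_le_pow_right₀ (by norm_num : (1:ℝ) ≤ 2)
                omega
        have e1 : (2:ℝ) ^ (m + 3) * (2 ^ m * p.2) = 2 ^ (2 * m + 3) * p.2 := by
          rw [pow_add, two_mul, pow_add]
          ring
        have e2 : (2:ℝ) ^ (2 * m + 4) = 2 ^ (2 * m + 3) + 2 ^ (2 * m + 3) := by
          rw [pow_succ]
          ring
        have h4 : (2:ℝ) ^ (m + 3) * p₀.2 < 2 ^ (2 * m + 3) * p.2 := by
          rw [← e1]
          have := pow_pos (by norm_num : (0:ℝ) < 2) (m + 3)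
          nlinarith
        rw [e2]
        nlinarith
      exact (measure_mono hinc).trans (aux_pow_ball μ hd p.1 hpr (2 * m + 4))
    -- counting
    by_contra hcon
    push_neg at hcon
    have hle : (((N₀ + 1) * Kc ^ (2 * m + 4) + 1 : ℕ) : ℕ∞) ≤ D.encard := by
      have := hcon
      rw [hDdef] at this ⊢
      push_cast
      exact Order.add_one_le_of_lt this
    obtain ⟨t, htD, htcard⟩ := Set.exists_subset_encard_eq hle
    have htfin : t.Finite := Set.finite_of_encard_eq_coe htcard
    have hFcard : htfin.toFinset.card = (N₀ + 1) * Kc ^ (2 * m + 4) + 1 := by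
      have h := htfin.encard_eq_coe_toFinset_card
      rw [htcard] at h
      exact_mod_cast h.symm
    have hFD : ↑htfin.toFinset ⊆ D := by
      rw [Set.Finite.coe_toFinset]
      rw [hDdef] at htD ⊢
      exact htD
    have hBigpos : μ (ball x (2 ^ (m + 3) * p₀.2)) ≠ 0 := hpos x _ (by positivity)
    have hBigfin : μ (ball x (2 ^ (m + 3) * p₀.2)) ≠ ⊤ := (hfinB _ isBounded_ball).ne
    have hγbound : (Cd:ℝ≥0∞) ^ (2 * m + 4) * (N₀:ℝ≥0∞) ≤
        (((N₀ + 1) * Kc ^ (2 * m + 4) : ℕ) : ℝ≥0∞) := by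
      have h1 : (Cd:ℝ≥0∞) ≤ ((Kc:ℕ) : ℝ≥0∞) := by
        rw [show ((Kc:ℕ) : ℝ≥0∞) = ((Kc : ℝ≥0) : ℝ≥0∞) by push_cast; rfl]
        rw [ENNReal.coe_le_coe]
        exact_mod_cast hKc
      push_cast
      calc (Cd:ℝ≥0∞) ^ (2 * m + 4) * (N₀:ℝ≥0∞)
          ≤ ((Kc:ℝ≥0∞)) ^ (2 * m + 4) * ((N₀:ℝ≥0∞) + 1) := by
            gcongr
            exact le_self_add
        _ = ((N₀:ℝ≥0∞) + 1) * (Kc:ℝ≥0∞) ^ (2 * m + 4) := by ring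
    have hchain : (((N₀ + 1) * Kc ^ (2 * m + 4) + 1 : ℕ) : ℝ≥0∞) *
        μ (ball x (2 ^ (m + 3) * p₀.2)) ≤
        (((N₀ + 1) * Kc ^ (2 * m + 4) : ℕ) : ℝ≥0∞) * μ (ball x (2 ^ (m + 3) * p₀.2)) := by
      calc (((N₀ + 1) * Kc ^ (2 * m + 4) + 1 : ℕ) : ℝ≥0∞) * μ (ball x (2 ^ (m + 3) * p₀.2))
          = ∑ q ∈ htfin.toFinset, μ (ball x (2 ^ (m + 3) * p₀.2)) := by
            rw [Finset.sum_const, hFcard, nsmul_eq_mul]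
        _ ≤ ∑ q ∈ htfin.toFinset, (Cd:ℝ≥0∞) ^ (2 * m + 4) * μ (ball q.1 q.2) :=
            Finset.sum_le_sum fun q hq => hlowBig q (hFD hq)
        _ = (Cd:ℝ≥0∞) ^ (2 * m + 4) * ∑ q ∈ htfin.toFinset, μ (ball q.1 q.2) := by
            rw [Finset.mul_sum]
        _ ≤ (Cd:ℝ≥0∞) ^ (2 * m + 4) * ((N₀:ℝ≥0∞) * μ (ball x (2 ^ (m + 3) * p₀.2))) := by
            refine mul_le_mul_right (aux_fincnt μ S W N₀ hcov hover _ measurableSet_ball _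
              (fun q hq => (hFD hq).1) (fun q hq => hsubBig q (hFD hq))) _
        _ = ((Cd:ℝ≥0∞) ^ (2 * m + 4) * (N₀:ℝ≥0∞)) * μ (ball x (2 ^ (m + 3) * p₀.2)) := by
            ring
        _ ≤ _ := mul_le_mul_left hγbound _
    have hfinal := (ENNReal.mul_le_mul_iff_left hBigpos hBigfin).mp hchain
    have : ((N₀ + 1) * Kc ^ (2 * m + 4) + 1 : ℕ) ≤ ((N₀ + 1) * Kc ^ (2 * m + 4) : ℕ) := by
      exact_mod_cast hfinal
    omega
end
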